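/- Let Y be a metric space equipped with its Hausdorff 2-measure H². If y ∈ Y is a point such that it is not the case that lim_{r→0} H²(B(y,r))/r² = ∞ (i.e., there exist k > 0 and a sequence of radii r_n → 0 with H²(B(y,r_n)) ≤ k·r_n²), then the 2-modulus of the family of non-constant curves in Y passing through y is zero. -/

import Mathlib

open Metric MeasureTheory Filter Set
open scoped ENNReal NNReal Topology

/-!
STATEMENT 9: Uniformization of length surfaces by weakly (4/π)-quasiconformal maps.

Let `X` be a length surface of locally finite Hausdorff 2-measure homeomorphic to the
2-sphere, the closed unit disk, or the plane `ℂ`.  Then there is a weakly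
`4/π`-quasiconformal map `h : Ω → X`, where `Ω` is respectively the 2-sphere, the closed
unit disk, or (in the third case) either the open unit disk or the plane.

The 2-sphere is realized as the unit sphere in Euclidean 3-space; its restricted metric
induces the same curve lengths, the same Hausdorff 2-measure and hence the same moduli of
curve families as the Riemannian spherical metric.  A map is weakly `K`-quasiconformal if
it is continuous, surjective and monotone (preimages of points are connected) and
`Mod Γ ≤ K · Mod h(Γ)` for every curve family `Γ`, where the 2-modulus is computed with
respect to the Hausdorff 2-measure (normalized so as to coincide with Lebesgue measure on
the plane) and line integrals are with respect to arc length via unit-speed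
reparametrization.
-/

/-- A curve in a metric space: a continuous map on a compact interval. -/
structure Curve (X : Type*) [MetricSpace X] where
  a : ℝ
  b : ℝ
  hab : a ≤ b
  toFun : ℝ → X
  cont : ContinuousOn toFun (Set.Icc a b)

namespace Curve
variable {X Y : Type*} [MetricSpace X] [MetricSpace Y]

/-- The length of a curve: the total variation of its parametrization. -/
noncomputable def length (γ : Curve X) : ℝ≥0∞ := eVariationOn γ.toFun (Set.Icc γ.a γ.b)

/-- The integral of `ρ` along a (rectifiable) curve with respect to arc length, computed
via the unit-speed (natural) reparametrization of the curve. -/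
noncomputable def lineIntegral (γ : Curve X) (ρ : X → ℝ≥0∞) : ℝ≥0∞ :=
  ∫⁻ s in Set.Icc (0 : ℝ) γ.length.toReal,
    ρ (naturalParameterization γ.toFun (Set.Icc γ.a γ.b) γ.a s)

/-- The image curve `h ∘ γ` under a continuous map `h`. -/
def map (γ : Curve X) (h : X → Y) (hh : Continuous h) : Curve Y :=
  ⟨γ.a, γ.b, γ.hab, h ∘ γ.toFun, hh.comp_continuousOn γ.cont⟩

end Curve

/-- The Hausdorff 2-measure, normalized so as to coincide with Lebesgue measure on `ℝ²`. -/
noncomputable def hausdorff2 (X : Type*) [MetricSpace X] [MeasurableSpace X] [BorelSpace X] :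
    Measure X := (ENNReal.ofReal (Real.pi / 4)) • MeasureTheory.Measure.hausdorffMeasure 2

/-- `ρ` is admissible for the curve family `Γ` if it is Borel and `∫_γ ρ ds ≥ 1` for
every rectifiable curve `γ ∈ Γ`. -/
def Admissible {X : Type*} [MetricSpace X] [MeasurableSpace X] [BorelSpace X]
    (ρ : X → ℝ≥0∞) (Γ : Set (Curve X)) : Prop :=
  Measurable ρ ∧ ∀ γ ∈ Γ, γ.length ≠ ⊤ → 1 ≤ γ.lineIntegral ρ

/-- The 2-modulus of a curve family, with respect to the Hausdorff 2-measure. -/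
noncomputable def modulus {X : Type*} [MetricSpace X] [MeasurableSpace X] [BorelSpace X]
    (Γ : Set (Curve X)) : ℝ≥0∞ :=
  ⨅ (ρ : X → ℝ≥0∞) (_ : Admissible ρ Γ), ∫⁻ x, (ρ x) ^ 2 ∂(hausdorff2 X)

/-!
STATEMENT 14: If at some point `y` of a metric space `Y` it is not the case that
`lim_{r→0} H²(B(y,r))/r² = ∞` — that is, there are `k > 0` and radii `rₙ → 0` with
`H²(B(y,rₙ)) ≤ k·rₙ²` — then the 2-modulus of the family of non-constant curves passing
through `y` is zero.
-/

/-- The trace (image) of a curve. -/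
def Curve.trace {X : Type*} [MetricSpace X] (γ : Curve X) : Set X :=
  γ.toFun '' Set.Icc γ.a γ.b

/-- The family of non-constant curves passing through the point `y`. -/
def curvesThrough {Y : Type*} [MetricSpace Y] (y : Y) : Set (Curve Y) :=
  {γ | y ∈ γ.trace ∧
    ∃ s ∈ Set.Icc γ.a γ.b, ∃ t ∈ Set.Icc γ.a γ.b, γ.toFun s ≠ γ.toFun t}

section Aux
variable {Y : Type*} [MetricSpace Y]

/-- Key: continuity of f gives arbitrarily small variation just to the right of t. -/
lemma exists_eVar_right_small {f : ℝ → Y} {a b t : ℝ} (hf : ContinuousOn f (Icc a b))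
    (hfin : eVariationOn f (Icc a b) ≠ ⊤) (ht : t ∈ Ico a b) {ε : ℝ≥0∞} (hε : ε ≠ 0) :
    ∃ u ∈ Ioc t b, eVariationOn f (Icc t u) < ε := by
  by_contra hcon
  push_neg at hcon
  -- replace ε by a positive real d with ofReal d ≤ ε
  obtain ⟨d, hd, hdε⟩ : ∃ d : ℝ, 0 < d ∧ ENNReal.ofReal d ≤ ε := by
    rcases eq_or_ne ε ⊤ with rfl | hne
    · exact ⟨1, one_pos, le_top⟩
    · exact ⟨ε.toReal, ENNReal.toReal_pos hε hne, (ENNReal.ofReal_toReal hne).le⟩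
  have H : ∀ u ∈ Ioc t b, ENNReal.ofReal d ≤ eVariationOn f (Icc t u) :=
    fun u hu => hdε.trans (hcon u hu)
  -- continuity at t
  have hct : ContinuousWithinAt f (Icc a b) t := hf t ⟨ht.1, ht.2.le⟩
  rw [Metric.continuousWithinAt_iff] at hct
  obtain ⟨δ, hδ, hδball⟩ := hct (d/8) (by linarith)
  set u : ℝ := min b (t + δ/2) with hu_def
  have htu : t < u := lt_min ht.2 (by linarith)
  have hub : u ≤ b := min_le_left _ _
  have hball : ∀ x ∈ Icc t u, edist (f x) (f t) < ENNReal.ofReal (d/8) := by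
    intro x hx
    have hx' : x ∈ Icc a b := ⟨ht.1.trans hx.1, hx.2.trans hub⟩
    have : dist x t < δ := by
      rw [Real.dist_eq, abs_of_nonneg (by linarith [hx.1])]
      have : x ≤ t + δ/2 := hx.2.trans (min_le_right _ _)
      linarith
    have := hδball hx' this
    rw [edist_dist]
    exact ENNReal.ofReal_lt_ofReal_iff (by linarith) |>.mpr this
  -- partition extraction
  have P : ∀ w ∈ Ioc t u, ∃ w' ∈ Ioo t w, ENNReal.ofReal (d/2) ≤ eVariationOn f (Icc w' w) := by
    intro w hw
    have h1 : ENNReal.ofReal (3*d/4) < eVariationOn f (Icc t w) := by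
      refine lt_of_lt_of_le ?_ (H w ⟨hw.1, hw.2.trans hub⟩)
      exact ENNReal.ofReal_lt_ofReal_iff hd |>.mpr (by linarith)
    rw [eVariationOn] at h1
    rw [lt_iSup_iff] at h1
    obtain ⟨⟨n, p, hp, hps⟩, hsum⟩ := h1
    -- inner induction
    have Q : ∀ n : ℕ, ∀ p : ℕ → ℝ, Monotone p → (∀ i, p i ∈ Icc t w) →
        ENNReal.ofReal (5*d/8) < ∑ i ∈ Finset.range n, edist (f (p (i+1))) (f (p i)) →
        ∃ w' ∈ Ioo t w, ENNReal.ofReal (d/2) ≤ eVariationOn f (Icc w' w) := by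
      intro n
      induction n with
      | zero =>
        intro p _ _ hS
        simp only [Finset.range_zero, Finset.sum_empty] at hS
        have : (0:ℝ≥0∞) < ENNReal.ofReal (5*d/8) := ENNReal.ofReal_pos.mpr (by linarith)
        exact absurd hS (by simp)
      | succ n ih =>
        intro p hp hps hS
        by_cases hp0 : t < p 0
        · refine ⟨(t + p 0)/2, ⟨by linarith, lt_of_lt_of_le (by linarith) (hps 0).2⟩, ?_⟩
          refine le_trans (le_of_lt ?_) (eVariationOn.sum_le (f := f) (n := n+1) hp (fun i => ?_))
          · exact lt_of_le_of_lt (ENNReal.ofReal_le_ofReal (by linarith)) hS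
          · exact ⟨le_trans (by linarith) (hp (Nat.zero_le i)), (hps i).2⟩
        · have hp0' : p 0 = t := le_antisymm (not_lt.mp hp0) (hps 0).1
          rw [Finset.sum_range_succ'] at hS
          by_cases hp1 : t < p 1
          · -- drop the first term, which is < d/8
            have hterm : edist (f (p 1)) (f (p 0)) < ENNReal.ofReal (d/8) := by
              rw [hp0']
              exact hball (p 1) ⟨(hps 1).1, (hps 1).2.trans hw.2⟩
            have hT : ENNReal.ofReal (d/2) ≤
                ∑ i ∈ Finset.range n, edist (f (p (i+1+1))) (f (p (i+1))) := by
              by_contra hc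
              push_neg at hc
              have := ENNReal.add_lt_add hc hterm
              rw [← ENNReal.ofReal_add (by linarith) (by linarith)] at this
              exact absurd (hS.trans this) (by
                simp only [not_lt]
                exact ENNReal.ofReal_le_ofReal (by linarith))
            refine ⟨(t + p 1)/2, ⟨by linarith, lt_of_lt_of_le (by linarith) (hps 1).2⟩, ?_⟩
            refine le_trans hT (eVariationOn.sum_le (f := f) (n := n) (fun i j hij => hp (by omega)) (fun i => ?_))
            exact ⟨le_trans (by linarith) (hp (by omega : 1 ≤ i + 1)), (hps (i+1)).2⟩
          · have hp1' : p 1 = t := le_antisymm (not_lt.mp hp1) (hps 1).1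
            have hzero : edist (f (p 1)) (f (p 0)) = 0 := by
              rw [hp0', hp1', edist_self]
            rw [hzero, add_zero] at hS
            exact ih (fun i => p (i+1)) (fun i j hij => hp (by omega)) (fun i => hps (i+1)) hS
    exact Q (n) p hp hps (lt_of_le_of_lt (ENNReal.ofReal_le_ofReal (by linarith)) hsum)
  -- iterate to get infinite variation
  have C : ∀ n : ℕ, ∀ w ∈ Ioc t u, ENNReal.ofReal (n * (d/2)) ≤ eVariationOn f (Icc t w) := by
    intro n
    induction n with
    | zero => intro w _; simp
    | succ n ih =>
      intro w hw
      obtain ⟨w', hw', hvar⟩ := P w hw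
      have hIH := ih w' ⟨hw'.1, hw'.2.le.trans hw.2⟩
      have hadd := eVariationOn.Icc_add_Icc f (s := Icc t w) hw'.1.le hw'.2.le
        ⟨hw'.1.le, hw'.2.le⟩
      rw [inter_eq_self_of_subset_right (Icc_subset_Icc_right hw'.2.le),
        inter_eq_self_of_subset_right (Icc_subset_Icc_left hw'.1.le),
        inter_self] at hadd
      calc ENNReal.ofReal ((n+1 : ℕ) * (d/2))
          = ENNReal.ofReal (n * (d/2)) + ENNReal.ofReal (d/2) := by
            rw [← ENNReal.ofReal_add (by positivity) (by linarith)]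
            congr 1
            push_cast
            ring
        _ ≤ eVariationOn f (Icc t w') + eVariationOn f (Icc w' w) := add_le_add hIH hvar
        _ = eVariationOn f (Icc t w) := hadd
  have hfin' : eVariationOn f (Icc t u) ≠ ⊤ :=
    fun h => hfin (top_le_iff.mp (h ▸ eVariationOn.mono f (Icc_subset_Icc ht.1 hub)))
  obtain ⟨n, hn⟩ := exists_nat_gt ((eVariationOn f (Icc t u)).toReal / (d/2))
  have := C n u ⟨htu, le_refl u⟩
  rw [ENNReal.ofReal_le_iff_le_toReal hfin'] at this
  have hlt : (eVariationOn f (Icc t u)).toReal / (d/2) < n := hn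
  rw [div_lt_iff₀ (by linarith)] at hlt
  linarith

lemma exists_eVar_left_small {f : ℝ → Y} {a b t : ℝ} (hf : ContinuousOn f (Icc a b))
    (hfin : eVariationOn f (Icc a b) ≠ ⊤) (ht : t ∈ Ioc a b) {ε : ℝ≥0∞} (hε : ε ≠ 0) :
    ∃ u ∈ Ico a t, eVariationOn f (Icc u t) < ε := by
  set g : ℝ → Y := f ∘ Neg.neg with hg
  have himg : ∀ p q : ℝ, eVariationOn g (Icc p q) = eVariationOn f (Icc (-q) (-p)) := by
    intro p q
    rw [eVariationOn.comp_eq_of_antitoneOn f Neg.neg (fun x _ y _ h => neg_le_neg h),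
      Set.image_neg_Icc]
  have hgc : ContinuousOn g (Icc (-b) (-a)) := by
    refine hf.comp continuous_neg.continuousOn ?_
    intro x hx
    constructor <;> [linarith [hx.2]; linarith [hx.1]]
  have hgfin : eVariationOn g (Icc (-b) (-a)) ≠ ⊤ := by
    rw [himg]; simpa using hfin
  obtain ⟨u', hu', hvar⟩ := exists_eVar_right_small hgc hgfin
    (⟨neg_le_neg ht.2, neg_lt_neg ht.1⟩ : -t ∈ Ico (-b) (-a)) hε
  refine ⟨-u', ⟨?_, ?_⟩, ?_⟩
  · exact le_neg_of_le_neg hu'.2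
  · exact neg_lt_of_neg_lt hu'.1
  · rw [himg] at hvar; simpa using hvar

lemma continuousOn_variationOnFromTo {f : ℝ → Y} {a b : ℝ} (hab : a ≤ b)
    (hf : ContinuousOn f (Icc a b)) (hfin : eVariationOn f (Icc a b) ≠ ⊤) :
    ContinuousOn (variationOnFromTo f (Icc a b) a) (Icc a b) := by
  have hlbv : LocallyBoundedVariationOn f (Icc a b) :=
    BoundedVariationOn.locallyBoundedVariationOn hfin
  have hdistvar : ∀ t ∈ Icc a b, ∀ u ∈ Icc a b, t ≤ u →
      dist (variationOnFromTo f (Icc a b) a u) (variationOnFromTo f (Icc a b) a t)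
        = (eVariationOn f (Icc a b ∩ Icc t u)).toReal := by
    intro t ht u hu htu
    have hadd := variationOnFromTo.add hlbv (left_mem_Icc.mpr hab) ht hu
    have hsub : variationOnFromTo f (Icc a b) a u - variationOnFromTo f (Icc a b) a t
        = variationOnFromTo f (Icc a b) t u := by linarith
    rw [Real.dist_eq, hsub, variationOnFromTo.eq_of_le f _ htu,
      abs_of_nonneg ENNReal.toReal_nonneg]
  intro t ht
  rw [Metric.continuousWithinAt_iff]
  intro ε hε
  have hεne : ENNReal.ofReal ε ≠ 0 := (ENNReal.ofReal_pos.mpr hε).ne'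
  obtain ⟨δp, hδp, hδpP⟩ : ∃ δp > 0, ∀ u ∈ Icc a b, t < u → u < t + δp →
      dist (variationOnFromTo f (Icc a b) a u) (variationOnFromTo f (Icc a b) a t) < ε := by
    by_cases htb : t < b
    · obtain ⟨up, hup, hvar⟩ := exists_eVar_right_small hf hfin ⟨ht.1, htb⟩ hεne
      refine ⟨up - t, by linarith [hup.1], fun u hu htu hult => ?_⟩
      rw [hdistvar t ht u hu htu.le]
      have h1 : eVariationOn f (Icc a b ∩ Icc t u) < ENNReal.ofReal ε := by
        refine lt_of_le_of_lt (eVariationOn.mono f ?_) hvar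
        exact fun x hx => ⟨hx.2.1, hx.2.2.trans (by linarith)⟩
      exact (ENNReal.lt_ofReal_iff_toReal_lt (ne_top_of_lt h1)).mp h1
    · exact ⟨1, one_pos, fun u hu htu _ => absurd (htu.trans_le hu.2) htb⟩
  obtain ⟨δm, hδm, hδmP⟩ : ∃ δm > 0, ∀ u ∈ Icc a b, u < t → t - δm < u →
      dist (variationOnFromTo f (Icc a b) a u) (variationOnFromTo f (Icc a b) a t) < ε := by
    by_cases hta : a < t
    · obtain ⟨um, hum, hvar⟩ := exists_eVar_left_small hf hfin ⟨hta, ht.2⟩ hεne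
      refine ⟨t - um, by linarith [hum.2], fun u hu hut hgt => ?_⟩
      rw [dist_comm, hdistvar u hu t ht hut.le]
      have h1 : eVariationOn f (Icc a b ∩ Icc u t) < ENNReal.ofReal ε := by
        refine lt_of_le_of_lt (eVariationOn.mono f ?_) hvar
        exact fun x hx => ⟨le_of_lt (by linarith [hx.2.1]), hx.2.2⟩
      exact (ENNReal.lt_ofReal_iff_toReal_lt (ne_top_of_lt h1)).mp h1
    · exact ⟨1, one_pos, fun u hu hut _ => absurd (hut.trans_le (not_lt.mp hta)) (not_lt.mpr hu.1)⟩
  refine ⟨min δp δm, lt_min hδp hδm, fun x hx hdx => ?_⟩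
  rcases lt_trichotomy t x with h | h | h
  · refine hδpP x hx h ?_
    rw [Real.dist_eq] at hdx
    have := (abs_lt.mp hdx).2
    have h2 : x - t < δp := lt_of_lt_of_le this (min_le_left _ _)
    linarith
  · rw [h, dist_self]; exact hε
  · refine hδmP x hx h ?_
    rw [Real.dist_eq] at hdx
    have := (abs_lt.mp hdx).1
    have h2 : -(δm) < x - t := lt_of_le_of_lt (neg_le_neg (min_le_right _ _)) this
    linarith

lemma image_variationOnFromTo {f : ℝ → Y} {a b : ℝ} (hab : a ≤ b)
    (hf : ContinuousOn f (Icc a b)) (hfin : eVariationOn f (Icc a b) ≠ ⊤) :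
    variationOnFromTo f (Icc a b) a '' Icc a b = Icc 0 (eVariationOn f (Icc a b)).toReal := by
  have hlbv : LocallyBoundedVariationOn f (Icc a b) :=
    BoundedVariationOn.locallyBoundedVariationOn hfin
  have hva : variationOnFromTo f (Icc a b) a a = 0 := variationOnFromTo.self f _ a
  have hvb : variationOnFromTo f (Icc a b) a b = (eVariationOn f (Icc a b)).toReal := by
    rw [variationOnFromTo.eq_of_le f _ hab, inter_self]
  have hmono := variationOnFromTo.monotoneOn hlbv (left_mem_Icc.mpr hab)
  apply Subset.antisymm
  · rintro _ ⟨t, ht, rfl⟩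
    constructor
    · rw [← hva]; exact hmono (left_mem_Icc.mpr hab) ht ht.1
    · rw [← hvb]; exact hmono ht (right_mem_Icc.mpr hab) ht.2
  · have := intermediate_value_Icc hab (continuousOn_variationOnFromTo hab hf hfin)
    rwa [hva, hvb] at this

lemma natParam_eval {f : ℝ → Y} {a b : ℝ} (hab : a ≤ b)
    (hfin : eVariationOn f (Icc a b) ≠ ⊤) {t : ℝ} (ht : t ∈ Icc a b) :
    naturalParameterization f (Icc a b) a (variationOnFromTo f (Icc a b) a t) = f t := by
  have hlbv : LocallyBoundedVariationOn f (Icc a b) :=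
    BoundedVariationOn.locallyBoundedVariationOn hfin
  exact edist_eq_zero.mp
    (edist_naturalParameterization_eq_zero hlbv (left_mem_Icc.mpr hab) ht)

lemma natParam_lipschitz {f : ℝ → Y} {a b : ℝ} (hab : a ≤ b)
    (hf : ContinuousOn f (Icc a b)) (hfin : eVariationOn f (Icc a b) ≠ ⊤) :
    ∀ σ ∈ Icc (0:ℝ) (eVariationOn f (Icc a b)).toReal,
    ∀ τ ∈ Icc (0:ℝ) (eVariationOn f (Icc a b)).toReal,
      dist (naturalParameterization f (Icc a b) a σ)
        (naturalParameterization f (Icc a b) a τ) ≤ dist σ τ := by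
  have hlbv : LocallyBoundedVariationOn f (Icc a b) :=
    BoundedVariationOn.locallyBoundedVariationOn hfin
  have himg := image_variationOnFromTo hab hf hfin
  have US := has_unit_speed_naturalParameterization f hlbv (left_mem_Icc.mpr hab)
  have key : ∀ σ τ : ℝ, σ ∈ Icc (0:ℝ) (eVariationOn f (Icc a b)).toReal →
      τ ∈ Icc (0:ℝ) (eVariationOn f (Icc a b)).toReal → σ ≤ τ →
      dist (naturalParameterization f (Icc a b) a σ)
        (naturalParameterization f (Icc a b) a τ) ≤ τ - σ := by
    intro σ τ hσ hτ hστ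
    have hσm : σ ∈ variationOnFromTo f (Icc a b) a '' Icc a b := himg ▸ hσ
    have hτm : τ ∈ variationOnFromTo f (Icc a b) a '' Icc a b := himg ▸ hτ
    have h1 : edist (naturalParameterization f (Icc a b) a σ)
        (naturalParameterization f (Icc a b) a τ)
        ≤ eVariationOn (naturalParameterization f (Icc a b) a)
          (variationOnFromTo f (Icc a b) a '' Icc a b ∩ Icc σ τ) :=
      eVariationOn.edist_le _ ⟨hσm, le_refl σ, hστ⟩ ⟨hτm, hστ, le_refl τ⟩
    rw [US hσm hτm] at h1
    rw [edist_dist] at h1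
    have h2 : ((1:ℝ≥0) : ℝ) * (τ - σ) = τ - σ := by norm_num
    rw [h2] at h1
    have := (ENNReal.ofReal_le_ofReal_iff (by linarith)).mp h1
    linarith [this]
  intro σ hσ τ hτ
  rcases le_total σ τ with h | h
  · calc dist _ _ ≤ τ - σ := key σ τ hσ hτ h
      _ ≤ dist σ τ := by rw [Real.dist_eq]; exact le_abs_self _ |>.trans_eq (by rw [abs_sub_comm])
  · rw [dist_comm, dist_comm σ τ]
    calc dist _ _ ≤ σ - τ := key τ σ hτ hσ h
      _ ≤ dist τ σ := by rw [Real.dist_eq]; exact le_abs_self _ |>.trans_eq (by rw [abs_sub_comm])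

lemma occupation {f : ℝ → Y} {a b : ℝ} (hab : a ≤ b)
    (hf : ContinuousOn f (Icc a b)) (hfin : eVariationOn f (Icc a b) ≠ ⊤)
    {y z : Y} {t0 t1 : ℝ} (ht0 : t0 ∈ Icc a b) (hy : f t0 = y)
    (ht1 : t1 ∈ Icc a b) (hz : f t1 = z) {r : ℝ} (hr : 0 < r) (hrz : r ≤ dist y z) :
    1 ≤ ∫⁻ σ in Icc (0:ℝ) (eVariationOn f (Icc a b)).toReal,
      ENNReal.ofReal (1/r) * (Metric.ball y r).indicator 1
        (naturalParameterization f (Icc a b) a σ) := by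
  set L := (eVariationOn f (Icc a b)).toReal with hL
  set Γ := naturalParameterization f (Icc a b) a with hΓ
  have himg := image_variationOnFromTo hab hf hfin
  set σ0 := variationOnFromTo f (Icc a b) a t0 with hσ0def
  set σ1 := variationOnFromTo f (Icc a b) a t1 with hσ1def
  have hσ0 : σ0 ∈ Icc (0:ℝ) L := himg ▸ mem_image_of_mem _ ht0
  have hσ1 : σ1 ∈ Icc (0:ℝ) L := himg ▸ mem_image_of_mem _ ht1
  have hΓσ0 : Γ σ0 = y := (natParam_eval hab hfin ht0).trans hy
  have hΓσ1 : Γ σ1 = z := (natParam_eval hab hfin ht1).trans hz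
  have hlip := natParam_lipschitz hab hf hfin
  have hdist : r ≤ dist σ0 σ1 := by
    refine le_trans ?_ (hlip σ0 hσ0 σ1 hσ1)
    show r ≤ dist (Γ σ0) (Γ σ1)
    rw [hΓσ0, hΓσ1]; exact hrz
  have main : ∀ I : Set ℝ, MeasurableSet I → I ⊆ Icc 0 L → (∀ σ ∈ I, Γ σ ∈ Metric.ball y r) →
      volume I = ENNReal.ofReal r →
      1 ≤ ∫⁻ σ in Icc (0:ℝ) L,
        ENNReal.ofReal (1/r) * (Metric.ball y r).indicator 1 (Γ σ) := by
    intro I hIm hIsub hIball hIvol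
    have h1 : (1:ℝ≥0∞) = ENNReal.ofReal (1/r) * volume I := by
      rw [hIvol, ← ENNReal.ofReal_mul (by positivity), one_div, inv_mul_cancel₀ hr.ne',
        ENNReal.ofReal_one]
    calc (1:ℝ≥0∞) = ENNReal.ofReal (1/r) * volume I := h1
      _ = ∫⁻ _ in I, ENNReal.ofReal (1/r) := (setLIntegral_const _ _).symm
      _ ≤ ∫⁻ σ in I, ENNReal.ofReal (1/r) * (Metric.ball y r).indicator 1 (Γ σ) := by
          refine setLIntegral_mono' hIm (fun σ hσ => ?_)
          rw [indicator_of_mem (hIball σ hσ), Pi.one_apply, mul_one]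
      _ ≤ ∫⁻ σ in Icc (0:ℝ) L,
            ENNReal.ofReal (1/r) * (Metric.ball y r).indicator 1 (Γ σ) :=
          lintegral_mono' (Measure.restrict_mono hIsub le_rfl) le_rfl
  rcases le_total σ0 σ1 with h | h
  · have hd : dist σ0 σ1 = σ1 - σ0 := by rw [Real.dist_eq, abs_of_nonpos (by linarith)]; ring
    refine main (Ico σ0 (σ0 + r)) measurableSet_Ico ?_ ?_ ?_
    · intro σ hσ
      exact ⟨hσ0.1.trans hσ.1, by linarith [hσ.2, hσ1.2, hdist.trans_eq hd]⟩
    · intro σ hσ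
      rw [Metric.mem_ball]
      have hσmem : σ ∈ Icc (0:ℝ) L :=
        ⟨hσ0.1.trans hσ.1, by linarith [hσ.2, hσ1.2, hdist.trans_eq hd]⟩
      calc dist (Γ σ) y = dist (Γ σ) (Γ σ0) := by rw [hΓσ0]
        _ ≤ dist σ σ0 := hlip σ hσmem σ0 hσ0
        _ < r := by rw [Real.dist_eq, abs_of_nonneg (by linarith [hσ.1])]; linarith [hσ.2]
    · rw [Real.volume_Ico, add_sub_cancel_left]
  · have hd : dist σ0 σ1 = σ0 - σ1 := by rw [Real.dist_eq, abs_of_nonneg (by linarith)]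
    refine main (Ioc (σ0 - r) σ0) measurableSet_Ioc ?_ ?_ ?_
    · intro σ hσ
      exact ⟨by linarith [hσ.1, hσ1.1, hdist.trans_eq hd], hσ.2.trans hσ0.2⟩
    · intro σ hσ
      rw [Metric.mem_ball]
      have hσmem : σ ∈ Icc (0:ℝ) L :=
        ⟨by linarith [hσ.1, hσ1.1, hdist.trans_eq hd], hσ.2.trans hσ0.2⟩
      calc dist (Γ σ) y = dist (Γ σ) (Γ σ0) := by rw [hΓσ0]
        _ ≤ dist σ σ0 := hlip σ hσmem σ0 hσ0
        _ < r := by rw [Real.dist_eq, abs_of_nonpos (by linarith [hσ.2])]; linarith [hσ.1]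
    · rw [Real.volume_Ioc, sub_sub_cancel]

end Aux

lemma exists_halving_seq {Q : ℝ → Prop} (key : ∀ δ : ℝ, 0 < δ → ∃ c, 0 < c ∧ c ≤ δ ∧ Q c)
    {d : ℝ} (hd : 0 < d) :
    ∃ s : ℕ → ℝ, (∀ j, 0 < s j) ∧ (∀ j, Q (s j)) ∧ s 0 ≤ d ∧ ∀ j, s (j+1) ≤ s j / 2 := by
  choose g hpos hle hQ using key
  let F : ℕ → {c : ℝ // 0 < c} := fun n =>
    Nat.rec ⟨g d hd, hpos d hd⟩ (fun _ p => ⟨g (p.1/2) (half_pos p.2), hpos _ _⟩) n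
  refine ⟨fun n => (F n).1, fun n => (F n).2, fun n => ?_, hle d hd, fun n => hle _ _⟩
  cases n with
  | zero => exact hQ d hd
  | succ m => exact hQ _ _

section Adm
variable {Y : Type*} [MetricSpace Y] [MeasurableSpace Y] [BorelSpace Y]

lemma adm_exists (y : Y) {k : ℝ} (hk : 0 < k)
    (key : ∀ δ : ℝ, 0 < δ → ∃ c, 0 < c ∧ c ≤ δ ∧
      hausdorff2 Y (Metric.ball y c) ≤ ENNReal.ofReal (k * c^2))
    {d : ℝ} (hd : 0 < d) {N : ℕ} (hN : N ≠ 0) :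
    ∃ ρ : Y → ℝ≥0∞, Measurable ρ ∧
      (∀ γ : Curve Y, γ.length ≠ ⊤ → y ∈ γ.trace → (∃ z ∈ γ.trace, d ≤ dist y z) →
        1 ≤ γ.lineIntegral ρ) ∧
      ∫⁻ x, ρ x ^ 2 ∂(hausdorff2 Y) ≤ ENNReal.ofReal (4*k) / N := by
  classical
  obtain ⟨s, hs_pos, hs_meas, hs_le, hs_half⟩ := exists_halving_seq key hd
  have hdec : Antitone s := antitone_nat_of_succ_le
    (fun n => (hs_half n).trans (by linarith [hs_pos n]))
  have hsum : ∀ J : ℕ, ∑ j ∈ Finset.range (J+1), 1 / s j ≤ 2 / s J := by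
    intro J
    induction J with
    | zero => simp only [zero_add, Finset.sum_range_one]
              rw [div_le_div_iff₀ (hs_pos 0) (hs_pos 0)]; nlinarith [hs_pos 0]
    | succ J ih =>
      rw [Finset.sum_range_succ]
      have h1 : 2 / s J ≤ 1 / s (J+1) := by
        rw [div_le_div_iff₀ (hs_pos J) (hs_pos (J+1))]
        nlinarith [hs_half J, hs_pos (J+1)]
      have h2 : 1 / s (J+1) + 1 / s (J+1) = 2 / s (J+1) := by ring
      linarith
  set ρ : Y → ℝ≥0∞ := fun x => (N:ℝ≥0∞)⁻¹ *
    ∑ j ∈ Finset.range N, ENNReal.ofReal (1/s j) * (Metric.ball y (s j)).indicator 1 x with hρ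
  have hNne : (N:ℝ≥0∞) ≠ 0 := Nat.cast_ne_zero.mpr hN
  have hNtop : (N:ℝ≥0∞) ≠ ⊤ := ENNReal.natCast_ne_top N
  have hmeas_j : ∀ j : ℕ, Measurable fun x : Y =>
      ENNReal.ofReal (1/s j) * (Metric.ball y (s j)).indicator 1 x :=
    fun j => measurable_const.mul (measurable_one.indicator measurableSet_ball)
  have hρmeas : Measurable ρ :=
    measurable_const.mul (Finset.measurable_sum _ fun j _ => hmeas_j j)
  refine ⟨ρ, hρmeas, ?_, ?_⟩
  · -- admissibility
    rintro γ hL hyt ⟨z, hzt, hdz⟩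
    have hab := γ.hab
    have hf := γ.cont
    have hfin : eVariationOn γ.toFun (Icc γ.a γ.b) ≠ ⊤ := hL
    set L := (eVariationOn γ.toFun (Icc γ.a γ.b)).toReal with hLdef
    set Γ := naturalParameterization γ.toFun (Icc γ.a γ.b) γ.a with hΓdef
    have hlip := natParam_lipschitz hab hf hfin
    have hΓcont : ContinuousOn Γ (Icc (0:ℝ) L) := by
      refine (LipschitzOnWith.of_dist_le_mul (K := 1) (fun x hx w hw => ?_)).continuousOn
      rw [NNReal.coe_one, one_mul]
      exact hlip x hx w hw
    have hΓae : AEMeasurable Γ (volume.restrict (Icc (0:ℝ) L)) :=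
      hΓcont.aemeasurable measurableSet_Icc
    obtain ⟨t0, ht0, hft0⟩ := hyt
    obtain ⟨t1, ht1, hft1⟩ := hzt
    have hLI : γ.lineIntegral ρ = (N:ℝ≥0∞)⁻¹ *
        ∑ j ∈ Finset.range N, ∫⁻ σ in Icc (0:ℝ) L,
          ENNReal.ofReal (1/s j) * (Metric.ball y (s j)).indicator 1 (Γ σ) := by
      rw [Curve.lineIntegral]
      rw [lintegral_const_mul' _ _ (ENNReal.inv_ne_top.mpr hNne)]
      congr 1
      exact lintegral_finset_sum' _ (fun j _ => (hmeas_j j).comp_aemeasurable hΓae)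
    rw [hLI]
    have hone : ∀ j ∈ Finset.range N, (1:ℝ≥0∞) ≤ ∫⁻ σ in Icc (0:ℝ) L,
        ENNReal.ofReal (1/s j) * (Metric.ball y (s j)).indicator 1 (Γ σ) := by
      intro j _
      refine occupation hab hf hfin ht0 hft0 ht1 hft1 (hs_pos j) ?_
      calc s j ≤ s 0 := hdec (Nat.zero_le j)
        _ ≤ d := hs_le
        _ ≤ dist y z := hdz
    calc (1:ℝ≥0∞) = (N:ℝ≥0∞)⁻¹ * N := (ENNReal.inv_mul_cancel hNne hNtop).symm
      _ ≤ _ := by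
          refine mul_le_mul_right ?_ _
          calc (N:ℝ≥0∞) = ∑ _j ∈ Finset.range N, 1 := by simp
            _ ≤ _ := Finset.sum_le_sum hone
  · -- energy bound
    have hpt : ∀ x : Y,
        (∑ j ∈ Finset.range N, ENNReal.ofReal (1/s j) * (Metric.ball y (s j)).indicator 1 x)^2
          ≤ ∑ j ∈ Finset.range N,
            ENNReal.ofReal (4/(s j)^2) * (Metric.ball y (s j)).indicator 1 x := by
      intro x
      by_cases hx : ∃ j ∈ Finset.range N, x ∈ Metric.ball y (s j)
      · obtain ⟨j0, hj0N, hj0⟩ := hx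
        set P : ℕ → Prop := fun j => x ∈ Metric.ball y (s j) with hP
        set J := Nat.findGreatest P (N-1) with hJ
        have hj0le : j0 ≤ N - 1 := Nat.le_sub_one_of_lt (Finset.mem_range.mp hj0N)
        have hJP : P J := Nat.findGreatest_spec hj0le hj0
        have hJlt : J < N := lt_of_le_of_lt (Nat.findGreatest_le _)
          (Nat.sub_lt (Nat.pos_of_ne_zero hN) one_pos)
        have hmem : ∀ j ≤ J, x ∈ Metric.ball y (s j) :=
          fun j hj => Metric.ball_subset_ball (hdec hj) hJP
        have hnot : ∀ j, J < j → j < N → ¬ P j :=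
          fun j h1 h2 => Nat.findGreatest_is_greatest h1 (Nat.le_sub_one_of_lt h2)
        have hT : ∑ j ∈ Finset.range N,
            ENNReal.ofReal (1/s j) * (Metric.ball y (s j)).indicator 1 x
            = ∑ j ∈ Finset.range (J+1), ENNReal.ofReal (1/s j) := by
          rw [← Finset.sum_subset (Finset.range_subset_range.mpr hJlt) ?h]
          · refine Finset.sum_congr rfl (fun j hj => ?_)
            have : x ∈ Metric.ball y (s j) :=
              hmem j (Nat.lt_succ_iff.mp (Finset.mem_range.mp hj))
            rw [indicator_of_mem this, Pi.one_apply, mul_one]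
          case h =>
            intro j hjN hjJ
            have h1 : J < j := by
              rcases Nat.lt_or_ge j (J+1) with h | h
              · exact absurd (Finset.mem_range.mpr h) hjJ
              · omega
            rw [indicator_of_notMem (hnot j h1 (Finset.mem_range.mp hjN)), mul_zero]
        rw [hT]
        have hofsum : ∑ j ∈ Finset.range (J+1), ENNReal.ofReal (1/s j)
            = ENNReal.ofReal (∑ j ∈ Finset.range (J+1), 1/s j) :=
          (ENNReal.ofReal_sum_of_nonneg (fun j _ => (one_div_pos.mpr (hs_pos j)).le)).symm
        calc (∑ j ∈ Finset.range (J+1), ENNReal.ofReal (1/s j))^2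
            = ENNReal.ofReal (∑ j ∈ Finset.range (J+1), 1/s j) ^2 := by rw [hofsum]
          _ ≤ ENNReal.ofReal (2 / s J) ^ 2 := by
              exact pow_le_pow_left' (ENNReal.ofReal_le_ofReal (hsum J)) 2
          _ = ENNReal.ofReal ((2 / s J)^2) := by
              rw [← ENNReal.ofReal_pow (div_nonneg (by norm_num) (hs_pos J).le)]
          _ = ENNReal.ofReal (4 / (s J)^2) := by
              congr 1; field_simp [(hs_pos J).ne']; ring
          _ ≤ _ := by
              have heq : ENNReal.ofReal (4/(s J)^2)
                  = ENNReal.ofReal (4/(s J)^2) * (Metric.ball y (s J)).indicator 1 x := by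
                rw [indicator_of_mem hJP, Pi.one_apply, mul_one]
              rw [heq]
              exact Finset.single_le_sum (f := fun j =>
                ENNReal.ofReal (4/(s j)^2) * (Metric.ball y (s j)).indicator 1 x)
                (fun i _ => zero_le) (Finset.mem_range.mpr hJlt)
      · push_neg at hx
        have hz : ∀ j ∈ Finset.range N,
            ENNReal.ofReal (1/s j) * (Metric.ball y (s j)).indicator 1 x = 0 := by
          intro j hj
          rw [indicator_of_notMem (hx j hj), mul_zero]
        rw [Finset.sum_eq_zero hz]
        simp
    have hinvtop : ((N:ℝ≥0∞)⁻¹)^2 ≠ ⊤ := by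
      exact ENNReal.pow_ne_top (ENNReal.inv_ne_top.mpr hNne)
    calc ∫⁻ x, ρ x ^ 2 ∂(hausdorff2 Y)
        ≤ ∫⁻ x, ((N:ℝ≥0∞)⁻¹)^2 * ∑ j ∈ Finset.range N,
            ENNReal.ofReal (4/(s j)^2) * (Metric.ball y (s j)).indicator 1 x
            ∂(hausdorff2 Y) := by
          refine lintegral_mono (fun x => ?_)
          rw [hρ, mul_pow]
          exact mul_le_mul_right (hpt x) _
      _ = ((N:ℝ≥0∞)⁻¹)^2 * ∑ j ∈ Finset.range N,
            ENNReal.ofReal (4/(s j)^2) * hausdorff2 Y (Metric.ball y (s j)) := by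
          rw [lintegral_const_mul' _ _ hinvtop]
          congr 1
          rw [lintegral_finset_sum (f := fun j x => ENNReal.ofReal (4/(s j)^2) * (Metric.ball y (s j)).indicator 1 x) _ (fun j _ => measurable_const.mul (measurable_one.indicator measurableSet_ball))]
          refine Finset.sum_congr rfl (fun j _ => ?_)
          rw [lintegral_const_mul' _ _ ENNReal.ofReal_ne_top,
            lintegral_indicator_one measurableSet_ball]
      _ ≤ ((N:ℝ≥0∞)⁻¹)^2 * ∑ _j ∈ Finset.range N, ENNReal.ofReal (4*k) := by
          refine mul_le_mul_right (Finset.sum_le_sum (fun j _ => ?_)) _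
          calc ENNReal.ofReal (4/(s j)^2) * hausdorff2 Y (Metric.ball y (s j))
              ≤ ENNReal.ofReal (4/(s j)^2) * ENNReal.ofReal (k * (s j)^2) :=
                mul_le_mul_right (hs_meas j) _
            _ = ENNReal.ofReal (4*k) := by
                rw [← ENNReal.ofReal_mul (by positivity)]
                congr 1
                field_simp [(hs_pos j).ne']
      _ = ENNReal.ofReal (4*k) / N := by
          rw [Finset.sum_const, Finset.card_range, nsmul_eq_mul]
          rw [sq]
          calc (N:ℝ≥0∞)⁻¹ * (N:ℝ≥0∞)⁻¹ * ((N:ℝ≥0∞) * ENNReal.ofReal (4*k))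
              = ((N:ℝ≥0∞)⁻¹ * (N:ℝ≥0∞)) * ((N:ℝ≥0∞)⁻¹ * ENNReal.ofReal (4*k)) := by ring
            _ = ENNReal.ofReal (4*k) / N := by
                rw [ENNReal.inv_mul_cancel hNne hNtop, one_mul, div_eq_mul_inv, mul_comm]

end Adm


theorem modulus_curvesThrough_eq_zero
    (Y : Type) [MetricSpace Y] [MeasurableSpace Y] [BorelSpace Y]
    (y : Y)
    (hy : ∃ k : ℝ, 0 < k ∧ ∃ r : ℕ → ℝ, (∀ n, 0 < r n) ∧
      Filter.Tendsto r Filter.atTop (nhds 0) ∧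
      ∀ n, hausdorff2 Y (Metric.ball y (r n)) ≤ ENNReal.ofReal (k * (r n) ^ 2)) :
    modulus (curvesThrough y) = 0 := by
  obtain ⟨k, hk, r, hrpos, hrtend, hrmeas⟩ := hy
  have key : ∀ δ : ℝ, 0 < δ → ∃ c, 0 < c ∧ c ≤ δ ∧
      hausdorff2 Y (Metric.ball y c) ≤ ENNReal.ofReal (k * c^2) := by
    intro δ hδ
    obtain ⟨n, hn⟩ := (hrtend.eventually (gt_mem_nhds hδ)).exists
    exact ⟨r n, hrpos n, hn.le, hrmeas n⟩
  rw [← le_zero_iff]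
  refine ENNReal.le_of_forall_pos_le_add (fun ε' hε' _ => ?_)
  rw [zero_add]
  set ε : ℝ≥0∞ := (ε' : ℝ≥0∞) with hεdef
  have hεne : ε ≠ 0 := by rw [hεdef]; exact_mod_cast hε'.ne'
  have hεtop : ε ≠ ⊤ := ENNReal.coe_ne_top
  have hchoose : ∀ n : ℕ, ∃ ρ : Y → ℝ≥0∞, Measurable ρ ∧
      (∀ γ : Curve Y, γ.length ≠ ⊤ → y ∈ γ.trace →
        (∃ z ∈ γ.trace, 1/((n:ℝ)+1) ≤ dist y z) → 1 ≤ γ.lineIntegral ρ) ∧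
      ∫⁻ x, ρ x ^ 2 ∂(hausdorff2 Y) ≤ ε / 2^(n+1) := by
    intro n
    set η : ℝ≥0∞ := ε / 2^(n+1) with hη
    have hη0 : η ≠ 0 := by
      rw [hη]
      simp only [ne_eq, ENNReal.div_eq_zero_iff, not_or]
      exact ⟨hεne, ENNReal.pow_ne_top ENNReal.ofNat_ne_top⟩
    have hηtop : η ≠ ⊤ := by
      rw [hη]
      exact (ENNReal.div_lt_top hεtop (pow_ne_zero _ (by norm_num))).ne
    obtain ⟨N, hNgt⟩ := ENNReal.exists_nat_gt
      (ENNReal.div_lt_top ENNReal.ofReal_ne_top hη0).ne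
    have hN0 : N ≠ 0 := by
      rintro rfl
      simp only [Nat.cast_zero] at hNgt
      exact (not_lt_of_ge zero_le) hNgt
    obtain ⟨ρ, h1, h2, h3⟩ := adm_exists y hk key
      (d := 1/((n:ℝ)+1)) (by positivity) hN0
    refine ⟨ρ, h1, h2, h3.trans ?_⟩
    rw [ENNReal.div_le_iff (Nat.cast_ne_zero.mpr hN0) (ENNReal.natCast_ne_top N)]
    have := (ENNReal.div_lt_iff (Or.inl hη0) (Or.inl hηtop)).mp hNgt
    exact le_of_lt (by rwa [mul_comm] at this)
  choose ρs hmeas hadm henergy using hchoose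
  set ρ : Y → ℝ≥0∞ := fun x => ⨆ n, ρs n x with hρdef
  have hρmeas : Measurable ρ := Measurable.iSup hmeas
  have hAdm : Admissible ρ (curvesThrough y) := by
    refine ⟨hρmeas, ?_⟩
    rintro γ ⟨hyt, t0, ht0, t1, ht1, hne⟩ hL
    have hpos : 0 < max (dist y (γ.toFun t0)) (dist y (γ.toFun t1)) := by
      by_contra h
      push_neg at h
      have e0 : dist y (γ.toFun t0) = 0 :=
        le_antisymm (le_trans (le_max_left _ _) h) dist_nonneg
      have e1 : dist y (γ.toFun t1) = 0 :=
        le_antisymm (le_trans (le_max_right _ _) h) dist_nonneg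
      exact hne ((dist_eq_zero.mp e0).symm.trans (dist_eq_zero.mp e1))
    obtain ⟨n, hn⟩ := exists_nat_one_div_lt hpos
    have hz : ∃ z ∈ γ.trace, 1/((n:ℝ)+1) ≤ dist y z := by
      rcases le_total (dist y (γ.toFun t0)) (dist y (γ.toFun t1)) with h | h
      · exact ⟨γ.toFun t1, ⟨t1, ht1, rfl⟩, by rw [max_eq_right h] at hn; linarith⟩
      · exact ⟨γ.toFun t0, ⟨t0, ht0, rfl⟩, by rw [max_eq_left h] at hn; linarith⟩
    refine le_trans (hadm n γ hL hyt hz) (lintegral_mono (fun σ => ?_))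
    exact le_iSup (fun m => ρs m _) n
  have hE : ∫⁻ x, ρ x ^2 ∂(hausdorff2 Y) ≤ ε := by
    have hptw : ∀ x, ρ x ^2 ≤ ∑' n, ρs n x ^2 := by
      intro x
      rw [hρdef, sq, ENNReal.iSup_mul]
      refine iSup_le (fun n => ?_)
      rw [ENNReal.mul_iSup]
      refine iSup_le (fun m => ?_)
      rcases le_total (ρs n x) (ρs m x) with h | h
      · calc ρs n x * ρs m x ≤ ρs m x * ρs m x := mul_le_mul_left h _
          _ = ρs m x ^2 := (sq _).symm
          _ ≤ ∑' i, ρs i x ^2 := ENNReal.le_tsum m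
      · calc ρs n x * ρs m x ≤ ρs n x * ρs n x := mul_le_mul_right h _
          _ = ρs n x ^2 := (sq _).symm
          _ ≤ ∑' i, ρs i x ^2 := ENNReal.le_tsum n
    have htsum : ∑' n : ℕ, ε / 2^(n+1) = ε := by
      have h1 : ∀ n : ℕ, ε / 2^(n+1) = ε * ((2⁻¹ : ℝ≥0∞)^n * 2⁻¹) := by
        intro n
        rw [div_eq_mul_inv, pow_succ, ENNReal.mul_inv (Or.inl (by norm_num)) (Or.inl (ENNReal.pow_ne_top ENNReal.ofNat_ne_top)), ENNReal.inv_pow]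
      simp_rw [h1]
      rw [ENNReal.tsum_mul_left, ENNReal.tsum_mul_right, ENNReal.tsum_geometric]
      have h2 : (1:ℝ≥0∞) - 2⁻¹ = 2⁻¹ := by
        rw [← ENNReal.inv_two_add_inv_two, ENNReal.add_sub_cancel_right
          (by norm_num : (2⁻¹:ℝ≥0∞) ≠ ⊤)]
      rw [h2, inv_inv]
      rw [ENNReal.mul_inv_cancel (by norm_num) (by norm_num), mul_one]
    calc ∫⁻ x, ρ x ^2 ∂(hausdorff2 Y)
        ≤ ∫⁻ x, ∑' n, ρs n x ^2 ∂(hausdorff2 Y) := lintegral_mono hptw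
      _ = ∑' n, ∫⁻ x, ρs n x ^2 ∂(hausdorff2 Y) :=
          lintegral_tsum (fun n => ((hmeas n).pow_const 2).aemeasurable)
      _ ≤ ∑' n : ℕ, ε / 2^(n+1) := ENNReal.tsum_le_tsum henergy
      _ = ε := htsum
  calc modulus (curvesThrough y) ≤ ∫⁻ x, ρ x ^2 ∂(hausdorff2 Y) := by
        rw [modulus]
        exact iInf₂_le ρ hAdm
    _ ≤ ε := hE
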